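/- Let J = { i : A_i < ∞ }. For every x ∈ ℝ^d_+, if R(x) < F(x) + Δ then Σ_{i∈J} x_i/A_i < 1. -/

import Mathlib

open Set
open scoped Classical

noncomputable section

/-- The nonnegative orthant of `ℝ^d` (with the Euclidean structure). -/
def orthant (d : ℕ) : Set (EuclideanSpace ℝ (Fin d)) := {x | ∀ i, 0 ≤ x i}

/-- The subdifferential (set of subgradients) of a function `φ : ℝ₊ → ℝ` at a point `t`. -/
def subdiff (φ : ℝ → ℝ) (t : ℝ) : Set ℝ :=
  {v | ∀ s : ℝ, 0 ≤ s → φ t + v * (s - t) ≤ φ s}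

/-- `Fi F i t = F (t • e_i)`, the restriction of `F` to the `i`-th coordinate axis. -/
def Fi {d : ℕ} (F : EuclideanSpace ℝ (Fin d) → ℝ) (i : Fin d) (t : ℝ) : ℝ :=
  F (t • EuclideanSpace.single i (1 : ℝ))

/-- The set `{t > 0 : (F_i(t) + Δ - F(0))/t ∈ ∂F_i(t)}` defining `A_i`. -/
def setA {d : ℕ} (F : EuclideanSpace ℝ (Fin d) → ℝ) (Δ : ℝ) (i : Fin d) : Set ℝ :=
  {t | 0 < t ∧ (Fi F i t + Δ - F 0) / t ∈ subdiff (Fi F i) t}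

/-- `A_i` (finite value; `A_i = ∞` corresponds to `setA F Δ i` being empty). -/
def Avar {d : ℕ} (F : EuclideanSpace ℝ (Fin d) → ℝ) (Δ : ℝ) (i : Fin d) : ℝ :=
  sInf (setA F Δ i)

/-- `B_i = (F_i(A_i) + Δ - F(0))/A_i` if `A_i < ∞`, and
`B_i = sup ⋃_{t>0} ∂F_i(t)` otherwise. -/
def Bvar {d : ℕ} (F : EuclideanSpace ℝ (Fin d) → ℝ) (Δ : ℝ) (i : Fin d) : ℝ :=
  if (setA F Δ i).Nonempty then (Fi F i (Avar F Δ i) + Δ - F 0) / Avar F Δ i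
  else sSup (⋃ t ∈ Ioi (0 : ℝ), subdiff (Fi F i) t)

/-- The inner product `⟨B, x⟩`. -/
def Bdot {d : ℕ} (F : EuclideanSpace ℝ (Fin d) → ℝ) (Δ : ℝ)
    (x : EuclideanSpace ℝ (Fin d)) : ℝ :=
  ∑ i, Bvar F Δ i * x i

/-- The set `{t > 0 : F(0) + ⟨B, t·x/‖x‖⟩ ≥ Δ + F(t·x/‖x‖)}` defining `H(x)`. -/
def setH {d : ℕ} (F : EuclideanSpace ℝ (Fin d) → ℝ) (Δ : ℝ)
    (x : EuclideanSpace ℝ (Fin d)) : Set ℝ :=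
  {t | 0 < t ∧ Δ + F ((t / ‖x‖) • x) ≤ F 0 + Bdot F Δ ((t / ‖x‖) • x)}

/-- The game analogue `R` of the concave envelope: `R(0) = F(0)`; for `x ≠ 0`,
`R(x) = F(x) + Δ` if `‖x‖ ≥ H(x)` (i.e. `setH F Δ x` is nonempty with `sInf ≤ ‖x‖`),
and `R(x) = F(0) + ⟨B, x⟩` if `‖x‖ < H(x)`. -/
def Rfun {d : ℕ} (F : EuclideanSpace ℝ (Fin d) → ℝ) (Δ : ℝ)
    (x : EuclideanSpace ℝ (Fin d)) : ℝ :=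
  if x = 0 then F 0
  else if (setH F Δ x).Nonempty ∧ sInf (setH F Δ x) ≤ ‖x‖ then F x + Δ
  else F 0 + Bdot F Δ x

/-- Membership in the class `𝒢`: `f : ℝ^d₊ → ℝ₊` continuous, `F ≤ f ≤ F + Δ`, and `f`
is concave on every convex subset `D` of the orthant on which `f < F + Δ`. -/
def memG {d : ℕ} (F : EuclideanSpace ℝ (Fin d) → ℝ) (Δ : ℝ)
    (f : EuclideanSpace ℝ (Fin d) → ℝ) : Prop :=
  ContinuousOn f (orthant d) ∧
  (∀ x ∈ orthant d, 0 ≤ f x) ∧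
  (∀ x ∈ orthant d, F x ≤ f x ∧ f x ≤ F x + Δ) ∧
  (∀ D : Set (EuclideanSpace ℝ (Fin d)), D ⊆ orthant d → Convex ℝ D →
    (∀ x ∈ D, f x < F x + Δ) → ConcaveOn ℝ D f)


section AuxLemmas

variable {d : ℕ} {F : EuclideanSpace ℝ (Fin d) → ℝ} {Δ : ℝ} {L : NNReal}

lemma single_mem_orthant (i : Fin d) {t : ℝ} (ht : 0 ≤ t) :
    t • EuclideanSpace.single i (1:ℝ) ∈ orthant d := by
  intro j
  simp only [PiLp.smul_apply, EuclideanSpace.single_apply, smul_eq_mul]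
  positivity

lemma Fi_lip (hFlip : LipschitzOnWith L F (orthant d)) (i : Fin d) {s t : ℝ}
    (hs : 0 ≤ s) (ht : 0 ≤ t) : Fi F i t - Fi F i s ≤ L * |t - s| := by
  have h := hFlip.dist_le_mul _ (single_mem_orthant i ht) _ (single_mem_orthant i hs)
  have hdist : dist (t • EuclideanSpace.single i (1:ℝ)) (s • EuclideanSpace.single i (1:ℝ)) = |t - s| := by
    rw [dist_eq_norm, ← sub_smul, norm_smul, EuclideanSpace.norm_single]
    simp [Real.norm_eq_abs]
  rw [hdist] at h
  calc Fi F i t - Fi F i s ≤ |Fi F i t - Fi F i s| := le_abs_self _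
  _ ≤ L * |t - s| := by rw [← Real.dist_eq]; exact h

lemma Fi_zero (i : Fin d) : Fi F i 0 = F 0 := by simp [Fi]

lemma Fi_convex (hFconv : ConvexOn ℝ (orthant d) F) (i : Fin d) :
    ConvexOn ℝ (Ici (0:ℝ)) (Fi F i) := by
  refine ⟨convex_Ici 0, fun s hs t ht a b ha hb hab => ?_⟩
  have : (a * s + b * t) • EuclideanSpace.single i (1:ℝ)
      = a • (s • EuclideanSpace.single i (1:ℝ)) + b • (t • EuclideanSpace.single i (1:ℝ)) := by
    rw [add_smul, smul_smul, smul_smul]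
  simp only [Fi, smul_eq_mul, this]
  exact hFconv.2 (single_mem_orthant i hs) (single_mem_orthant i ht) ha hb hab

/-- slightly abstract: φ convex on Ici 0, Lipschitz bound. -/
lemma exists_subgrad (hconv : ConvexOn ℝ (Ici (0:ℝ)) φ)
    (hlip : ∀ s t : ℝ, 0 ≤ s → 0 ≤ t → φ t - φ s ≤ L * |t - s|)
    {t : ℝ} (ht : 0 < t) : ∃ v, v ∈ subdiff φ t := by
  set Sl : Set ℝ := (fun s => (φ t - φ s) / (t - s)) '' (Ico 0 t) with hSl
  have hne : Sl.Nonempty := ⟨_, ⟨0, ⟨le_refl 0, ht⟩, rfl⟩⟩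
  have hbdd : BddAbove Sl := by
    refine ⟨L, fun v hv => ?_⟩
    obtain ⟨s, hs, rfl⟩ := hv
    have hts : (0:ℝ) < t - s := by linarith [hs.2]
    rw [div_le_iff₀ hts]
    calc φ t - φ s ≤ L * |t - s| := hlip s t hs.1 (le_of_lt ht)
    _ = L * (t - s) := by rw [abs_of_pos hts]
  refine ⟨sSup Sl, fun s hs => ?_⟩
  rcases lt_trichotomy s t with hst | hst | hst
  · have hts : (0:ℝ) < t - s := by linarith
    have hmem : (φ t - φ s) / (t - s) ∈ Sl := ⟨s, ⟨hs, hst⟩, rfl⟩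
    have := le_csSup hbdd hmem
    rw [div_le_iff₀ hts] at this
    nlinarith [this]
  · subst hst; simp
  · have hts : (0:ℝ) < s - t := by linarith
    have hub : sSup Sl ≤ (φ s - φ t) / (s - t) := by
      refine csSup_le hne fun v hv => ?_
      obtain ⟨u, hu, rfl⟩ := hv
      exact hconv.slope_mono_adjacent hu.1 hs hu.2 hst
    rw [le_div_iff₀ hts] at hub
    nlinarith [hub]

lemma subdiff_le (hlip : ∀ s t : ℝ, 0 ≤ s → 0 ≤ t → φ t - φ s ≤ L * |t - s|)
    {u v : ℝ} (hu : 0 < u) (hv : v ∈ subdiff φ u) : v ≤ L := by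
  have h1 := hv (u + 1) (by linarith)
  have h2 := hlip u (u + 1) hu.le (by linarith)
  simp only [add_sub_cancel_left] at h1 -- φ u + v * 1 ≤ φ (u+1)?
  have : |u + 1 - u| = 1 := by simp
  rw [this] at h2
  nlinarith

lemma bddAbove_union_subdiff (hlip : ∀ s t : ℝ, 0 ≤ s → 0 ≤ t → φ t - φ s ≤ L * |t - s|) :
    BddAbove (⋃ t ∈ Ioi (0:ℝ), subdiff φ t) := by
  refine ⟨L, fun v hv => ?_⟩
  simp only [mem_iUnion, mem_Ioi, exists_prop] at hv
  obtain ⟨u, hu, hvm⟩ := hv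
  exact subdiff_le hlip hu hvm

lemma axis_bound (hconv : ConvexOn ℝ (Ici (0:ℝ)) (Fi F i))
    (hlip : ∀ s t : ℝ, 0 ≤ s → 0 ≤ t → Fi F i t - Fi F i s ≤ L * |t - s|)
    (hi : ¬ (setA F Δ i).Nonempty) {t : ℝ} (ht : 0 ≤ t) :
    Fi F i t ≤ F 0 + Bvar F Δ i * t := by
  rcases eq_or_lt_of_le ht with h0 | h0
  · rw [← h0, Fi_zero]; linarith
  obtain ⟨v, hv⟩ := exists_subgrad hconv hlip h0
  have h1 := hv 0 le_rfl
  rw [Fi_zero] at h1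
  have hvB : v ≤ Bvar F Δ i := by
    rw [Bvar, if_neg hi]
    exact le_csSup (bddAbove_union_subdiff hlip)
      (by simp only [mem_iUnion, mem_Ioi, exists_prop]; exact ⟨t, h0, hv⟩)
  nlinarith

lemma Avar_pos (hΔ : 0 < Δ)
    (hlip : ∀ s t : ℝ, 0 ≤ s → 0 ≤ t → Fi F i t - Fi F i s ≤ L * |t - s|)
    (hi : (setA F Δ i).Nonempty) : 0 < Avar F Δ i := by
  have key : ∀ t ∈ setA F Δ i, Δ ≤ 2 * L * t := by
    intro t ht
    obtain ⟨htpos, hv⟩ := ht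
    set v := (Fi F i t + Δ - F 0) / t with hvdef
    have hvt : v * t = Fi F i t + Δ - F 0 := by
      rw [hvdef, div_mul_cancel₀ _ htpos.ne']
    have hvL : v ≤ L := subdiff_le hlip htpos hv
    have hlow : F 0 - Fi F i t ≤ L * t := by
      have := hlip t 0 htpos.le le_rfl
      rw [Fi_zero, abs_of_nonpos (by linarith)] at this
      linarith
    nlinarith [mul_le_mul_of_nonneg_right hvL htpos.le]
  have hL : 0 < (L:ℝ) := by
    obtain ⟨t, ht⟩ := hi
    have := key t ht
    by_contra hL
    push_neg at hL
    nlinarith [ht.1]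
  have : Δ / (2 * L) ≤ Avar F Δ i := le_csInf hi fun t ht => by
    rw [div_le_iff₀ (by positivity)]; linarith [key t ht]
  have : 0 < Δ / (2 * (L:ℝ)) := by positivity
  linarith

lemma Bvar_mul (hApos : 0 < Avar F Δ i) (hi : (setA F Δ i).Nonempty) :
    Bvar F Δ i * Avar F Δ i = Fi F i (Avar F Δ i) + Δ - F 0 := by
  rw [Bvar, if_pos hi, div_mul_cancel₀ _ hApos.ne']

set_option maxHeartbeats 1000000 in
lemma key {d : ℕ} {F : EuclideanSpace ℝ (Fin d) → ℝ} {Δ : ℝ} {L : NNReal}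
    (hd : 0 < d) (hΔ : 0 < Δ) (hFconv : ConvexOn ℝ (orthant d) F)
    (hFlip : LipschitzOnWith L F (orthant d))
    (x' : EuclideanSpace ℝ (Fin d)) (hx' : x' ∈ orthant d)
    (hsum : ∑ i ∈ Finset.univ.filter (fun i => (setA F Δ i).Nonempty), x' i / Avar F Δ i = 1) :
    F x' + Δ ≤ F 0 + Bdot F Δ x' := by
  set J : Finset (Fin d) := Finset.univ.filter (fun i => (setA F Δ i).Nonempty) with hJ
  set A : Fin d → ℝ := Avar F Δ with hA
  set B : Fin d → ℝ := Bvar F Δ with hB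
  have hlip : ∀ i : Fin d, ∀ s t : ℝ, 0 ≤ s → 0 ≤ t → Fi F i t - Fi F i s ≤ L * |t - s| :=
    fun i s t hs ht => Fi_lip hFlip i hs ht
  have hApos : ∀ i ∈ J, 0 < A i := fun i hi =>
    Avar_pos hΔ (hlip i) (Finset.mem_filter.mp hi).2
  have hxnn : ∀ i, 0 ≤ x' i := hx'
  set P : ℝ := ∑ i ∈ J, B i * x' i with hP
  set Q : ℝ := ∑ i ∈ Finset.univ.filter (fun i => ¬ (setA F Δ i).Nonempty), B i * x' i with hQ
  have hPQ : Bdot F Δ x' = P + Q := by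
    rw [Bdot, hP, hQ, Finset.sum_filter_add_sum_filter_not]
  set xJ : EuclideanSpace ℝ (Fin d) := WithLp.toLp 2 (fun j => if (setA F Δ j).Nonempty then x' j else 0) with hxJ
  set K : ℝ := Δ - P + L * ‖xJ‖ with hK
  have main : ∀ ε : ℝ, 0 < ε → ε < 1 → F x' + Δ - (F 0 + Bdot F Δ x') ≤ ε * K := by
    intro ε hε0 hε1
    have hdR : (0:ℝ) < d := by exact_mod_cast hd
    set w : Option (Fin d) → ℝ := fun o => Option.elim o (ε * J.card / d)
      (fun i => if i ∈ J then (1 - ε) * (x' i / A i) else ε / d) with hw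
    set p : Option (Fin d) → EuclideanSpace ℝ (Fin d) := fun o => Option.elim o 0
      (fun i => if i ∈ J then A i • EuclideanSpace.single i (1:ℝ)
        else ((d / ε) * x' i) • EuclideanSpace.single i (1:ℝ)) with hp
    have h₀ : ∀ o ∈ (Finset.univ : Finset (Option (Fin d))), 0 ≤ w o := by
      intro o _
      rcases o with _ | i
      · simp only [hw, Option.elim]
        exact div_nonneg (mul_nonneg hε0.le (Nat.cast_nonneg _)) hdR.le
      · simp only [hw, Option.elim]
        split_ifs with hi
        · exact mul_nonneg (by linarith) (div_nonneg (hxnn i) (hApos i hi).le)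
        · exact div_nonneg hε0.le hdR.le
    have hcard : (J.card : ℝ) + ((Finset.univ.filter (fun i => ¬ (setA F Δ i).Nonempty)).card : ℝ)
        = (d : ℝ) := by
      rw [← Nat.cast_add]
      norm_cast
      rw [Finset.card_filter_add_card_filter_not]
      simp
    have h₁ : ∑ o ∈ (Finset.univ : Finset (Option (Fin d))), w o = 1 := by
      rw [Fintype.sum_option]
      have hsplit : ∑ i : Fin d, w (some i)
          = ∑ i ∈ J, (1 - ε) * (x' i / A i)
            + ∑ i ∈ Finset.univ.filter (fun i => ¬ (setA F Δ i).Nonempty), (ε / d) := by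
        rw [← Finset.sum_filter_add_sum_filter_not Finset.univ (fun i => (setA F Δ i).Nonempty)]
        congr 1
        · exact Finset.sum_congr rfl fun i hi => by
            simp only [hw, Option.elim, if_pos (by exact hi : i ∈ J)]
        · exact Finset.sum_congr rfl fun i hi => by
            have : i ∉ J := by
              simp only [hJ, Finset.mem_filter, Finset.mem_univ, true_and] at hi ⊢
              simpa using hi
            simp only [hw, Option.elim, if_neg this]
      rw [hsplit, ← Finset.mul_sum, hsum, Finset.sum_const, nsmul_eq_mul]
      simp only [hw, Option.elim]
      field_simp
      nlinarith [hcard]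
    have hmem : ∀ o ∈ (Finset.univ : Finset (Option (Fin d))), p o ∈ orthant d := by
      intro o _
      rcases o with _ | i
      · intro j; simp [hp, Option.elim]
      · simp only [hp, Option.elim]
        split_ifs with hi
        · exact single_mem_orthant i (hApos i hi).le
        · exact single_mem_orthant i (mul_nonneg (div_nonneg hdR.le hε0.le) (hxnn i))
    have hJen := hFconv.map_sum_le h₀ h₁ hmem
    -- identify the center point
    set y : EuclideanSpace ℝ (Fin d) :=
      WithLp.toLp 2 (fun j => if (setA F Δ j).Nonempty then (1 - ε) * x' j else x' j) with hy
    have hcenter : ∑ o ∈ (Finset.univ : Finset (Option (Fin d))), w o • p o = y := by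
      ext j
      have := Finset.sum_apply j (Finset.univ : Finset (Option (Fin d))) (fun o => w o • p o)
      rw [WithLp.ofLp_sum, this, Fintype.sum_option]
      have hterm : ∀ i : Fin d, (w (some i) • p (some i)) j
          = if i = j then (if (setA F Δ j).Nonempty then (1 - ε) * x' j else x' j) else 0 := by
        intro i
        rcases eq_or_ne i j with rfl | hij
        · simp only [hw, hp, Option.elim, if_pos rfl]
          by_cases hiJ : i ∈ J
          · have hiN : (setA F Δ i).Nonempty := (Finset.mem_filter.mp hiJ).2
            simp only [if_pos hiJ, if_pos hiN, PiLp.smul_apply, EuclideanSpace.single_apply,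
              if_pos rfl, smul_eq_mul, mul_one, if_true]
            field_simp [(hApos i hiJ).ne']
          · have hiN : ¬ (setA F Δ i).Nonempty := by
              simp only [hJ, Finset.mem_filter, Finset.mem_univ, true_and] at hiJ
              exact hiJ
            simp only [if_neg hiJ, if_neg hiN, PiLp.smul_apply, EuclideanSpace.single_apply,
              if_pos rfl, smul_eq_mul, mul_one, if_true]
            field_simp
        · simp only [hw, hp, Option.elim, if_neg hij]
          split_ifs <;>
            simp [PiLp.smul_apply, EuclideanSpace.single_apply, if_neg (by exact fun h => hij (by simp [h]) : ¬ j = i)]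
      rw [Finset.sum_congr rfl (fun i _ => hterm i)]
      simp only [Finset.sum_ite_eq, Finset.mem_univ, if_pos]
      simp [hw, hp, hy, Option.elim]
    rw [hcenter] at hJen
    have hFpJ : ∀ i ∈ J, w (some i) • F (p (some i))
        = (1 - ε) * ((x' i / A i) * (F 0 - Δ) + B i * x' i) := by
      intro i hi
      have hiN : (setA F Δ i).Nonempty := (Finset.mem_filter.mp hi).2
      have hBA := Bvar_mul (hApos i hi) hiN
      simp only [hw, hp, Option.elim, if_pos hi, smul_eq_mul]
      have hre : F (A i • EuclideanSpace.single i (1:ℝ)) = Fi F i (A i) := rfl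
      rw [hre]
      have hFiA : Fi F i (A i) = F 0 + B i * A i - Δ := by
        have : B i * A i = Fi F i (A i) + Δ - F 0 := hBA
        linarith
      rw [hFiA]
      field_simp [(hApos i hi).ne']
      ring
    have hFpN : ∀ i ∈ Finset.univ.filter (fun i => ¬ (setA F Δ i).Nonempty),
        w (some i) • F (p (some i)) ≤ (ε / d) * F 0 + B i * x' i := by
      intro i hi
      have hiN : ¬ (setA F Δ i).Nonempty := by
        simpa using (Finset.mem_filter.mp hi).2
      have hiJ : i ∉ J := by
        simp only [hJ, Finset.mem_filter, Finset.mem_univ, true_and]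
        exact hiN
      simp only [hw, hp, Option.elim, if_neg hiJ, smul_eq_mul]
      have hre : F (((d:ℝ)/ε * x' i) • EuclideanSpace.single i (1:ℝ))
          = Fi F i ((d:ℝ)/ε * x' i) := rfl
      rw [hre]
      have hb := axis_bound (Δ := Δ) (Fi_convex hFconv i) (hlip i) hiN
        (t := (d:ℝ)/ε * x' i) (mul_nonneg (div_nonneg hdR.le hε0.le) (hxnn i))
      have hεd : 0 ≤ ε / (d:ℝ) := div_nonneg hε0.le hdR.le
      calc (ε/(d:ℝ)) * Fi F i ((d:ℝ)/ε * x' i)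
          ≤ (ε/(d:ℝ)) * (F 0 + B i * ((d:ℝ)/ε * x' i)) := mul_le_mul_of_nonneg_left hb hεd
        _ = (ε/(d:ℝ)) * F 0 + B i * x' i := by
            field_simp
    have hRHS : ∑ o ∈ (Finset.univ : Finset (Option (Fin d))), w o • F (p o)
        ≤ (1 - ε) * ((F 0 - Δ) + P) + Q + ε * F 0 := by
      rw [Fintype.sum_option]
      have hnone : w none • F (p none) = ε * J.card / d * F 0 := by
        simp [hw, hp, Option.elim, smul_eq_mul]
      have hsplit : ∑ i : Fin d, w (some i) • F (p (some i))
          = ∑ i ∈ J, w (some i) • F (p (some i))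
            + ∑ i ∈ Finset.univ.filter (fun i => ¬ (setA F Δ i).Nonempty),
              w (some i) • F (p (some i)) := by
        rw [← Finset.sum_filter_add_sum_filter_not Finset.univ (fun i => (setA F Δ i).Nonempty)]
      have h2 : ∑ i ∈ J, w (some i) • F (p (some i)) = (1 - ε) * ((F 0 - Δ) + P) := by
        rw [Finset.sum_congr rfl hFpJ, ← Finset.mul_sum, Finset.sum_add_distrib,
          ← Finset.sum_mul, hsum]
        rw [hP]
        ring
      have h3 : ∑ i ∈ Finset.univ.filter (fun i => ¬ (setA F Δ i).Nonempty),
          w (some i) • F (p (some i))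
          ≤ ((Finset.univ.filter (fun i => ¬ (setA F Δ i).Nonempty)).card : ℝ)
            * ((ε/(d:ℝ)) * F 0) + Q := by
        calc ∑ i ∈ Finset.univ.filter (fun i => ¬ (setA F Δ i).Nonempty),
            w (some i) • F (p (some i))
            ≤ ∑ i ∈ Finset.univ.filter (fun i => ¬ (setA F Δ i).Nonempty),
              ((ε / d) * F 0 + B i * x' i) := Finset.sum_le_sum hFpN
          _ = _ := by
              rw [Finset.sum_add_distrib, Finset.sum_const, nsmul_eq_mul, hQ]
      have hcombine : ε * J.card / d * F 0
          + ((Finset.univ.filter (fun i => ¬ (setA F Δ i).Nonempty)).card : ℝ)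
            * ((ε/(d:ℝ)) * F 0) = ε * F 0 := by
        have hc2 : ((Finset.univ.filter (fun i => ¬ (setA F Δ i).Nonempty)).card : ℝ)
            = (d : ℝ) - J.card := by linarith [hcard]
        rw [hc2]
        field_simp
        ring
      rw [hnone, hsplit, h2]
      linarith [h3, hcombine]
    have hFy : F y ≤ (1 - ε) * ((F 0 - Δ) + P) + Q + ε * F 0 := le_trans hJen hRHS
    have hymem : y ∈ orthant d := by
      intro j
      simp only [hy]
      split_ifs
      · exact mul_nonneg (by linarith) (hxnn j)
      · exact hxnn j
    have hdiff : x' - y = ε • xJ := by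
      ext j
      simp only [PiLp.sub_apply, PiLp.smul_apply, hy, hxJ, smul_eq_mul]
      split_ifs <;> ring
    have hdist : dist x' y = ε * ‖xJ‖ := by
      rw [dist_eq_norm, hdiff, norm_smul, Real.norm_eq_abs, abs_of_pos hε0]
    have hlipxy := hFlip.dist_le_mul x' hx' y hymem
    have hxy : F x' - F y ≤ L * (ε * ‖xJ‖) := by
      rw [← hdist]
      calc F x' - F y ≤ |F x' - F y| := le_abs_self _
        _ ≤ L * dist x' y := by rw [← Real.dist_eq]; exact hlipxy
    rw [hPQ, hK]
    have hexp : (1 - ε) * ((F 0 - Δ) + P) + Q + ε * F 0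
        = F 0 - Δ + P + Q + ε * (Δ - P) := by ring
    rw [hexp] at hFy
    clear hJen hRHS hcenter hmem h₀ h₁ hFpJ hFpN hlipxy hdiff hymem
    have hrr : ε * (Δ - P + (L:ℝ) * ‖xJ‖) = ε * (Δ - P) + (L:ℝ) * (ε * ‖xJ‖) := by ring
    rw [hrr]
    linarith
  by_contra hG
  push_neg at hG
  set G := F x' + Δ - (F 0 + Bdot F Δ x') with hGdef
  have hGpos : 0 < G := by rw [hGdef]; linarith
  have hK1 : 0 < |K| + 1 := by positivity
  set ε : ℝ := min (1/2) (G / (|K| + 1)) with hεdef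
  have hε0 : 0 < ε := lt_min (by norm_num) (div_pos hGpos hK1)
  have hε1 : ε < 1 := lt_of_le_of_lt (min_le_left _ _) (by norm_num)
  have h1 := main ε hε0 hε1
  have h2 : ε * K ≤ ε * |K| := mul_le_mul_of_nonneg_left (le_abs_self K) hε0.le
  have h3 : ε * |K| ≤ (G / (|K| + 1)) * |K| :=
    mul_le_mul_of_nonneg_right (min_le_right _ _) (abs_nonneg K)
  have h4 : (G / (|K| + 1)) * |K| < G := by
    rw [div_mul_eq_mul_div, div_lt_iff₀ hK1]
    nlinarith [abs_nonneg K]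
  linarith


end AuxLemmas

/-- Let `J = {i : A_i < ∞}`. If `R(x) < F(x) + Δ` for some `x` in the
nonnegative orthant, then `Σ_{i ∈ J} x_i / A_i < 1`. -/
theorem sum_lt_one_of_R_lt {d : ℕ} (hd : 0 < d) (Δ : ℝ) (hΔ : 0 < Δ)
    (F : EuclideanSpace ℝ (Fin d) → ℝ)
    (hF0 : ∀ x ∈ orthant d, 0 ≤ F x)
    (hFconv : ConvexOn ℝ (orthant d) F)
    (L : NNReal) (hFlip : LipschitzOnWith L F (orthant d))
    (x : EuclideanSpace ℝ (Fin d)) (hx : x ∈ orthant d)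
    (h : Rfun F Δ x < F x + Δ) :
    ∑ i ∈ Finset.univ.filter (fun i => (setA F Δ i).Nonempty), x i / Avar F Δ i < 1 := by
  by_contra hcon
  push_neg at hcon
  have hx0 : x ≠ 0 := by
    rintro rfl
    have : ∀ i : Fin d, (0 : EuclideanSpace ℝ (Fin d)) i = 0 := fun i => rfl
    simp only [this, zero_div, Finset.sum_const_zero] at hcon
    linarith
  set S := ∑ i ∈ Finset.univ.filter (fun i => (setA F Δ i).Nonempty), x i / Avar F Δ i with hS
  have hSpos : (0:ℝ) < S := lt_of_lt_of_le one_pos hcon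
  set x' : EuclideanSpace ℝ (Fin d) := S⁻¹ • x with hx'
  have hx'mem : x' ∈ orthant d := fun i => by
    simp only [hx', PiLp.smul_apply, smul_eq_mul]
    exact mul_nonneg (inv_nonneg.mpr hSpos.le) (hx i)
  have hsum' : ∑ i ∈ Finset.univ.filter (fun i => (setA F Δ i).Nonempty),
      x' i / Avar F Δ i = 1 := by
    have hterm : ∀ i : Fin d, x' i / Avar F Δ i = S⁻¹ * (x i / Avar F Δ i) := fun i => by
      simp only [hx', PiLp.smul_apply, smul_eq_mul, mul_div_assoc]
    rw [Finset.sum_congr rfl (fun i _ => hterm i), ← Finset.mul_sum, ← hS,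
      inv_mul_cancel₀ hSpos.ne']
  have hkey := key (L := L) hd hΔ hFconv hFlip x' hx'mem hsum'
  have hxn : (0:ℝ) < ‖x‖ := norm_pos_iff.mpr hx0
  have hx'n : ‖x'‖ = S⁻¹ * ‖x‖ := by
    rw [hx', norm_smul, Real.norm_eq_abs, abs_of_pos (by positivity)]
  have ht0 : (0:ℝ) < ‖x'‖ := by rw [hx'n]; positivity
  have hscale : (‖x'‖ / ‖x‖) • x = x' := by
    have : ‖x'‖ / ‖x‖ = S⁻¹ := by
      rw [hx'n, mul_div_assoc, div_self hxn.ne', mul_one]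
    rw [this, hx']
  have hmemH : ‖x'‖ ∈ setH F Δ x := by
    refine ⟨ht0, ?_⟩
    rw [hscale]
    linarith [hkey]
  have hbdd : BddBelow (setH F Δ x) := ⟨0, fun t ht => ht.1.le⟩
  have hSinv : S⁻¹ ≤ 1 := by
    rw [inv_le_one_iff₀]
    right
    exact hcon
  have hinf : sInf (setH F Δ x) ≤ ‖x‖ := by
    refine le_trans (csInf_le hbdd hmemH) ?_
    rw [hx'n]
    nlinarith
  have hR : Rfun F Δ x = F x + Δ := by
    rw [Rfun, if_neg hx0, if_pos ⟨⟨_, hmemH⟩, hinf⟩]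
  rw [hR] at h
  exact lt_irrefl _ h

end
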